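/- Let u₁, u₂ ∈ ℝ³ be unit vectors and let v₁, v₂ ∈ ℝ³ be orthonormal vectors. Let O := (1/√2)((u₁·σ) ⊗ (v₁·σ) + (u₂·σ) ⊗ (v₂·σ)). Then √(1 + ‖u₁ × u₂‖) is an eigenvalue of O (it lies in the spectrum of O), and every eigenvalue μ of O satisfies |μ| ≤ √(1 + ‖u₁ × u₂‖). -/

import Mathlib

open Matrix Kronecker Complex

/-- The Pauli matrix σ₁. -/
noncomputable def σ1 : Matrix (Fin 2) (Fin 2) ℂ := !![0, 1; 1, 0]

/-- The Pauli matrix σ₂. -/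
noncomputable def σ2 : Matrix (Fin 2) (Fin 2) ℂ := !![0, -Complex.I; Complex.I, 0]

/-- The Pauli matrix σ₃. -/
noncomputable def σ3 : Matrix (Fin 2) (Fin 2) ℂ := !![1, 0; 0, -1]

/-- For `a ∈ ℝ³`, the observable `a·σ = a₁σ₁ + a₂σ₂ + a₃σ₃`. -/
noncomputable def pauliDot (a : Fin 3 → ℝ) : Matrix (Fin 2) (Fin 2) ℂ :=
  (a 0 : ℂ) • σ1 + (a 1 : ℂ) • σ2 + (a 2 : ℂ) • σ3

/-- The Euclidean norm of a vector in `ℝ³`. -/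
noncomputable def enorm3 (a : Fin 3 → ℝ) : ℝ := Real.sqrt (a ⬝ᵥ a)

lemma pauli_mul (a b : Fin 3 → ℝ) :
    pauliDot a * pauliDot b =
      ((a ⬝ᵥ b : ℝ) : ℂ) • (1 : Matrix (Fin 2) (Fin 2) ℂ)
        + Complex.I • pauliDot (crossProduct a b) := by
  ext i j
  fin_cases i <;> fin_cases j <;>
    simp [pauliDot, σ1, σ2, σ3, Matrix.mul_apply, Fin.sum_univ_two, cross_apply,
      dotProduct, Fin.sum_univ_three, Matrix.one_apply] <;>
    ring_nf <;> simp [Complex.ext_iff] <;> ring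

lemma pauli_trace (a : Fin 3 → ℝ) : (pauliDot a).trace = 0 := by
  simp [pauliDot, σ1, σ2, σ3, Matrix.trace, Matrix.diag, Fin.sum_univ_two]

lemma pauli_zero : pauliDot 0 = 0 := by
  simp [pauliDot]

lemma pauli_neg (a : Fin 3 → ℝ) : pauliDot (-a) = -pauliDot a := by
  simp [pauliDot]; module

lemma pauli_sq (a : Fin 3 → ℝ) (h : a ⬝ᵥ a = 1) : pauliDot a * pauliDot a = 1 := by
  rw [pauli_mul, h, cross_self, pauli_zero]
  simp

/-- For unit vectors `u₁, u₂` and orthonormal `v₁, v₂`, the largest eigenvalue (in magnitude) of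
the steering operator `O` is `√(1 + ‖u₁ × u₂‖)`: it lies in the spectrum of `O`, and every
eigenvalue `μ` of `O` satisfies `|μ| ≤ √(1 + ‖u₁ × u₂‖)`. -/
theorem steering_op_largest_eigenvalue (u₁ u₂ v₁ v₂ : Fin 3 → ℝ)
    (hu₁ : u₁ ⬝ᵥ u₁ = 1) (hu₂ : u₂ ⬝ᵥ u₂ = 1) (hv₁ : v₁ ⬝ᵥ v₁ = 1) (hv₂ : v₂ ⬝ᵥ v₂ = 1)
    (hv₁₂ : v₁ ⬝ᵥ v₂ = 0)
    (O : Matrix (Fin 2 × Fin 2) (Fin 2 × Fin 2) ℂ)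
    (hO : O = ((1 / Real.sqrt 2 : ℝ) : ℂ) •
      (pauliDot u₁ ⊗ₖ pauliDot v₁ + pauliDot u₂ ⊗ₖ pauliDot v₂)) :
    ((Real.sqrt (1 + enorm3 (crossProduct u₁ u₂)) : ℝ) : ℂ) ∈ spectrum ℂ O ∧
      ∀ μ : ℂ, μ ∈ spectrum ℂ O →
        ‖μ‖ ≤ Real.sqrt (1 + enorm3 (crossProduct u₁ u₂)) := by
  set p : Fin 3 → ℝ := crossProduct u₁ u₂ with hp
  set w : Fin 3 → ℝ := crossProduct v₁ v₂ with hw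
  set n : ℝ := enorm3 p with hn
  set P : Matrix (Fin 2) (Fin 2) ℂ := pauliDot p with hP
  set W : Matrix (Fin 2) (Fin 2) ℂ := pauliDot w with hW
  set M : Matrix (Fin 2 × Fin 2) (Fin 2 × Fin 2) ℂ := P ⊗ₖ W with hM
  -- basic real facts
  have hpp0 : (0:ℝ) ≤ p ⬝ᵥ p := by
    simp only [dotProduct]
    exact Finset.sum_nonneg fun i _ => mul_self_nonneg _
  have hn0 : 0 ≤ n := Real.sqrt_nonneg _
  have hpp : p ⬝ᵥ p = n ^ 2 := by
    rw [hn, enorm3, Real.sq_sqrt hpp0]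
  have hww : w ⬝ᵥ w = 1 := by
    rw [hw, cross_dot_cross, hv₁, hv₂, hv₁₂]; ring
  -- matrix products
  have hWW : W * W = 1 := pauli_sq _ hww
  have hMM : M * M = ((n:ℂ)^2) • (1 : Matrix (Fin 2 × Fin 2) (Fin 2 × Fin 2) ℂ) := by
    rw [hM, ← Matrix.mul_kronecker_mul, hWW, hP, pauli_mul, cross_self, pauli_zero, hpp]
    push_cast
    simp [Matrix.smul_kronecker, Matrix.one_kronecker_one]
  -- O² = 1 - M
  have hs : ((1 / Real.sqrt 2 : ℝ) : ℂ) * ((1 / Real.sqrt 2 : ℝ) : ℂ) = (1/2 : ℂ) := by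
    rw [← Complex.ofReal_mul, div_mul_div_comm, Real.mul_self_sqrt (by norm_num : (0:ℝ) ≤ 2)]
    norm_num
  have hu₂₁ : u₂ ⬝ᵥ u₁ = u₁ ⬝ᵥ u₂ := dotProduct_comm _ _
  have hv₂₁ : v₂ ⬝ᵥ v₁ = 0 := by rw [dotProduct_comm, hv₁₂]
  have hA12 : pauliDot u₁ * pauliDot u₂ =
      ((u₁ ⬝ᵥ u₂ : ℝ) : ℂ) • 1 + Complex.I • P := by rw [pauli_mul, hP, hp]
  have hA21 : pauliDot u₂ * pauliDot u₁ =
      ((u₁ ⬝ᵥ u₂ : ℝ) : ℂ) • 1 + (-Complex.I) • P := by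
    rw [pauli_mul, hu₂₁, ← cross_anticomm, pauli_neg, ← hp, ← hP]
    simp
  have hB12 : pauliDot v₁ * pauliDot v₂ = Complex.I • W := by
    rw [pauli_mul, hv₁₂, ← hw, ← hW]; simp
  have hB21 : pauliDot v₂ * pauliDot v₁ = (-Complex.I) • W := by
    rw [pauli_mul, hv₂₁, ← cross_anticomm, pauli_neg, ← hw, ← hW]; simp
  have hO2 : O * O = 1 - M := by
    rw [hO, smul_mul_smul_comm, hs]
    rw [add_mul, mul_add, mul_add, ← Matrix.mul_kronecker_mul, ← Matrix.mul_kronecker_mul,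
      ← Matrix.mul_kronecker_mul, ← Matrix.mul_kronecker_mul,
      pauli_sq _ hu₁, pauli_sq _ hu₂, pauli_sq _ hv₁, pauli_sq _ hv₂,
      hA12, hA21, hB12, hB21, hM]
    simp only [Matrix.add_kronecker, Matrix.smul_kronecker,
      Matrix.kronecker_smul, Matrix.one_kronecker_one, smul_smul, Complex.I_mul_I,
      neg_mul, mul_neg, neg_neg]
    match_scalars <;> simp [Complex.I_sq] <;> ring
  -- annihilating polynomial identity
  have hO4 : (O*O) * (O*O) = (2:ℂ) • (O*O) - ((1:ℂ) - (n:ℂ)^2) • 1 := by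
    rw [hO2]
    simp only [sub_mul, mul_sub, mul_one, one_mul]
    rw [hMM]
    module
  have hq0 : O^4 - (2:ℂ) • O^2 + ((1:ℂ) - (n:ℂ)^2) • 1 = 0 := by
    have h4 : O^4 = (O*O)*(O*O) := by
      rw [show (4:ℕ) = 2*2 from rfl, pow_mul, sq, sq]
    rw [h4, sq, hO4]
    abel
  -- the bound
  have habs : ∀ μ : ℂ, μ ∈ spectrum ℂ O → ‖μ‖ ≤ Real.sqrt (1 + n) := by
    intro μ hμ
    set q : Polynomial ℂ :=
      Polynomial.X^4 - Polynomial.C (2:ℂ) * Polynomial.X^2 + Polynomial.C (1 - (n:ℂ)^2) with hqdef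
    have haq : Polynomial.aeval O q = 0 := by
      rw [hqdef, map_add, map_sub, map_pow, _root_.map_mul, map_pow, Polynomial.aeval_X,
        Polynomial.aeval_C, Polynomial.aeval_C, Algebra.algebraMap_eq_smul_one,
        Algebra.algebraMap_eq_smul_one, smul_mul_assoc, one_mul]
      exact hq0
    have hmem : q.eval μ ∈ spectrum ℂ (Polynomial.aeval O q) :=
      spectrum.subset_polynomial_aeval O q ⟨μ, hμ, rfl⟩
    rw [haq, spectrum.zero_eq] at hmem
    have heval : μ^4 - 2*μ^2 + (1 - (n:ℂ)^2) = 0 := by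
      simpa [hqdef] using hmem
    have hfacμ : (μ^2 - (1+(n:ℂ))) * (μ^2 - (1-(n:ℂ))) = 0 := by linear_combination heval
    have hle : ‖μ‖^2 ≤ 1 + n := by
      rcases mul_eq_zero.mp hfacμ with h | h
      · have hμ2 : μ^2 = ((1+n : ℝ) : ℂ) := by push_cast; linear_combination h
        have habs2 : ‖μ‖^2 = |1 + n| := by
          rw [← norm_pow, hμ2, Complex.norm_real, Real.norm_eq_abs]
        rw [habs2, _root_.abs_of_nonneg (by linarith : (0:ℝ) ≤ 1 + n)]
      · have hμ2 : μ^2 = ((1-n : ℝ) : ℂ) := by push_cast; linear_combination h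
        have habs2 : ‖μ‖^2 = |1 - n| := by
          rw [← norm_pow, hμ2, Complex.norm_real, Real.norm_eq_abs]
        rw [habs2]
        rcases abs_cases (1-n) with ⟨h1,_⟩ | ⟨h1,_⟩ <;> linarith
    calc ‖μ‖ = Real.sqrt (‖μ‖^2) :=
          (Real.sqrt_sq (norm_nonneg μ)).symm
      _ ≤ Real.sqrt (1 + n) := Real.sqrt_le_sqrt hle
  refine ⟨?_, habs⟩
  -- existence part
  set N : Matrix (Fin 2 × Fin 2) (Fin 2 × Fin 2) ℂ := (n:ℂ) • 1 + M with hNdef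
  have hNN : N * N = (2*(n:ℂ)) • N := by
    rw [hNdef]
    simp only [add_mul, mul_add, smul_mul_assoc, mul_smul_comm, one_mul, mul_one]
    rw [hMM]
    module
  have htrM : M.trace = 0 := by
    rw [hM, Matrix.trace_kronecker, hP, pauli_trace, zero_mul]
  have hdetN : N.det = 0 := by
    by_contra hne
    have hUn : IsUnit N := (Matrix.isUnit_iff_isUnit_det N).mpr (isUnit_iff_ne_zero.mpr hne)
    have hcan : N = (2*(n:ℂ)) • 1 := by
      have h1 : N * N = ((2*(n:ℂ)) • (1 : Matrix (Fin 2 × Fin 2) (Fin 2 × Fin 2) ℂ)) * N := by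
        rw [hNN, smul_mul_assoc, one_mul]
      exact hUn.mul_right_cancel h1
    have htrN : N.trace = (n:ℂ) * 4 := by
      rw [hNdef, Matrix.trace_add, Matrix.trace_smul, htrM, Matrix.trace_one]
      simp
    rw [hcan, Matrix.trace_smul, Matrix.trace_one] at htrN
    have hnc : (n:ℂ) = 0 := by
      have : (2*(n:ℂ)) * 4 = (n:ℂ) * 4 := by simpa using htrN
      linear_combination this / 4
    rw [hnc, mul_zero, zero_smul] at hcan
    rw [hcan, Matrix.det_zero] at hne
    exact hne rfl
  -- factorization (λ1 - O)(λ1 + O) = N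
  set l : ℝ := Real.sqrt (1+n) with hldef
  have hl2 : (l:ℂ) * (l:ℂ) = 1 + (n:ℂ) := by
    rw [← Complex.ofReal_mul, Real.mul_self_sqrt (by linarith)]
    push_cast; ring
  have hfac2 : ((l:ℂ) • 1 - O) * ((l:ℂ) • 1 + O) = N := by
    simp only [sub_mul, mul_add, add_mul, smul_mul_assoc, mul_smul_comm, one_mul, mul_one,
      smul_sub, smul_add, smul_smul]
    rw [hl2, hO2, hNdef]
    module
  -- symmetry via U = 1 ⊗ W
  set U : Matrix (Fin 2 × Fin 2) (Fin 2 × Fin 2) ℂ :=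
    (1 : Matrix (Fin 2) (Fin 2) ℂ) ⊗ₖ W with hUdef
  have hUU : U * U = 1 := by
    rw [hUdef, ← Matrix.mul_kronecker_mul, one_mul, hWW, Matrix.one_kronecker_one]
  have hwv₁ : w ⬝ᵥ v₁ = 0 := by
    rw [dotProduct_comm, hw]; exact dot_self_cross v₁ v₂
  have hwv₂ : w ⬝ᵥ v₂ = 0 := by
    rw [dotProduct_comm, hw]; exact dot_cross_self v₁ v₂
  have hWB₁ : W * pauliDot v₁ = (-1 : ℂ) • (pauliDot v₁ * W) := by
    have h1 : v₁ ⬝ᵥ w = 0 := by rw [dotProduct_comm]; exact hwv₁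
    rw [hW, pauli_mul, pauli_mul, ← cross_anticomm v₁ w, pauli_neg, hwv₁, h1]
    simp
  have hWB₂ : W * pauliDot v₂ = (-1 : ℂ) • (pauliDot v₂ * W) := by
    have h1 : v₂ ⬝ᵥ w = 0 := by rw [dotProduct_comm]; exact hwv₂
    rw [hW, pauli_mul, pauli_mul, ← cross_anticomm v₂ w, pauli_neg, hwv₂, h1]
    simp
  have hanti : U * O = (-1 : ℂ) • (O * U) := by
    rw [hO, hUdef]
    simp only [mul_smul_comm, smul_mul_assoc, mul_add, add_mul]
    rw [← Matrix.mul_kronecker_mul, ← Matrix.mul_kronecker_mul,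
      ← Matrix.mul_kronecker_mul, ← Matrix.mul_kronecker_mul,
      one_mul, one_mul, mul_one, mul_one, hWB₁, hWB₂]
    simp only [Matrix.kronecker_smul, smul_add, smul_smul]
    module
  have hdU : U.det * U.det = 1 := by
    rw [← Matrix.det_mul, hUU, Matrix.det_one]
  have hsym : ((l:ℂ) • 1 - O).det = ((l:ℂ) • 1 + O).det := by
    have h1 : U * (((l:ℂ) • 1 + O) * U) = (l:ℂ) • 1 - O := by
      rw [add_mul, smul_mul_assoc, one_mul, mul_add, mul_smul_comm, ← mul_assoc, hanti,
        smul_mul_assoc, mul_assoc, hUU]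
      simp only [mul_one]
      module
    have h2 := congrArg Matrix.det h1
    rw [Matrix.det_mul, Matrix.det_mul] at h2
    calc ((l:ℂ) • 1 - O).det = U.det * (((l:ℂ) • 1 + O).det * U.det) := h2.symm
      _ = (U.det * U.det) * ((l:ℂ) • 1 + O).det := by ring
      _ = ((l:ℂ) • 1 + O).det := by rw [hdU, one_mul]
  have hprod : ((l:ℂ) • 1 - O).det * ((l:ℂ) • 1 + O).det = 0 := by
    rw [← Matrix.det_mul, hfac2, hdetN]
  have hdetl : ((l:ℂ) • 1 - O).det = 0 := by
    rw [← hsym] at hprod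
    exact mul_self_eq_zero.mp hprod
  rw [spectrum.mem_iff, Algebra.algebraMap_eq_smul_one, Matrix.isUnit_iff_isUnit_det, hdetl]
  simp
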